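/- arXiv:1207.7291 — 4 statements merged into one kernel-verified Lean document; each statement's English description precedes it below -/
import Mathlib

section
/- For every prime p < 41 and every integer x, x² + x + 41 is not divisible by p. -/
lemma aux_zmod (n : ℕ) (h : ∀ y : ZMod n, y ^ 2 + y + 41 ≠ 0) (x : ℤ) :
    ¬ (n : ℤ) ∣ x ^ 2 + x + 41 := by
  intro hd
  have h2 : ((x ^ 2 + x + 41 : ℤ) : ZMod n) = 0 :=
    (ZMod.intCast_zmod_eq_zero_iff_dvd _ _).mpr hd
  push_cast at h2
  exact h _ h2

theorem stmt_3 : ∀ p : ℕ, p.Prime → p < 41 → ∀ x : ℤ, ¬ (p : ℤ) ∣ x ^ 2 + x + 41 := by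
  intro p hp hlt x
  interval_cases p <;>
  first
  | exact absurd hp (by decide)
  | exact aux_zmod _ (by decide) x
end

section
/- Let N > 1 be odd and write N − 1 = F·R with F even, F³ > N/2, and suppose for each prime p dividing F there exists an integer a with a^(N−1) ≡ 1 (mod N) and gcd(a^((N−1)/p) − 1, N) = 1. If, writing R = 2Fq + r with 1 ≤ r < 2F, either q = 0 or r² − 8q is not a perfect square, then N is prime. -/
private lemma aux_pow_factorization_dvd
    {n d p : ℕ} (hn : n ≠ 0) (hp : p.Prime) (hpn : p ∣ n)
    (hd : d ∣ n) (hnd : ¬ d ∣ n / p) :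
    p ^ n.factorization p ∣ d := by
  by_contra h
  have hd0 : d ≠ 0 := by rintro rfl; exact hn (Nat.eq_zero_of_zero_dvd hd)
  have hnp0 : n / p ≠ 0 := (Nat.div_ne_zero_iff_of_dvd hpn).mpr ⟨hn, hp.ne_zero⟩
  have hdf : d.factorization ≤ n.factorization :=
    (Nat.factorization_le_iff_dvd hd0 hn).mpr hd
  have hlt : d.factorization p < n.factorization p := by
    have := (hp.pow_dvd_iff_le_factorization hd0).not.mp h
    omega
  apply hnd
  rw [← Nat.factorization_le_iff_dvd hd0 hnp0, Nat.factorization_div hpn,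
    hp.factorization]
  intro x
  rw [Finsupp.tsub_apply]
  rcases eq_or_ne x p with rfl | hx
  · simp only [Finsupp.single_eq_same]
    omega
  · rw [Finsupp.single_eq_of_ne' (Ne.symm hx)]
    simpa using hdf x

private lemma aux_add_le_mul {m m' : ℕ} (hm : 1 ≤ m) (hm' : 1 ≤ m') :
    m + m' ≤ m * m' + 1 := by
  obtain ⟨x, rfl⟩ := Nat.exists_eq_add_of_le hm
  obtain ⟨y, rfl⟩ := Nat.exists_eq_add_of_le hm'
  ring_nf
  nlinarith

theorem stmt_13 (N F R q r : ℕ) (hN : 1 < N) (hodd : Odd N)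
    (hFR : N - 1 = F * R) (hFeven : Even F)
    (hF3 : ((F : ℚ)) ^ 3 > (N : ℚ) / 2)
    (hdiv : ∀ p : ℕ, p.Prime → p ∣ F →
      ∃ a : ℤ, a ^ (N - 1) ≡ 1 [ZMOD (N : ℤ)] ∧
        Int.gcd (a ^ ((N - 1) / p) - 1) (N : ℤ) = 1)
    (hqr : R = 2 * F * q + r) (hr1 : 1 ≤ r) (hr2 : r < 2 * F)
    (hsq : q = 0 ∨ ¬ ∃ s : ℤ, s ^ 2 = (r : ℤ) ^ 2 - 8 * q) :
    N.Prime := by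
  by_contra hnp
  -- basic facts
  have hN3 : 3 ≤ N := by
    rcases hodd with ⟨k, hk⟩; omega
  have hN1 : N - 1 ≠ 0 := by omega
  have h2F : 2 ∣ F := hFeven.two_dvd
  have hF0 : F ≠ 0 := by rintro rfl; omega
  have hFpos : 0 < F := Nat.pos_of_ne_zero hF0
  have hFdvd : F ∣ N - 1 := ⟨R, hFR⟩
  set e := (N - 1).factorization 2 with he
  set t := F.factorization 2 with ht
  set u := F / 2 ^ t with hu
  have hFfact : F.factorization ≤ (N - 1).factorization :=
    (Nat.factorization_le_iff_dvd hF0 hN1).mpr hFdvd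
  have hte : t ≤ e := hFfact 2
  set c := 2 ^ (e - t) with hc
  have hcpos : 1 ≤ c := Nat.one_le_two_pow
  set G := c * F with hG
  have hFut : 2 ^ t * u = F := Nat.ordProj_mul_ordCompl_eq_self F 2
  have hG2 : G = 2 ^ e * u := by
    rw [hG, hc, ← hFut, ← mul_assoc, ← pow_add]
    congr 2
    omega
  have hu_odd : ¬ 2 ∣ u := Nat.not_dvd_ordCompl Nat.prime_two hF0
  have hcop : Nat.Coprime (2 ^ e) u :=
    Nat.Coprime.pow_left _ ((Nat.prime_two.coprime_iff_not_dvd).mpr hu_odd)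
  have hGpos : 0 < G := by
    rw [hG]; exact Nat.mul_pos (by omega) hFpos
  have h2G : 2 ∣ G := Dvd.dvd.mul_left h2F c
  haveI : NeZero G := ⟨by omega⟩
  -- Step A/B : every prime factor of N is ≡ 1 mod G
  have hstep : ∀ ℓ : ℕ, ℓ.Prime → ℓ ∣ N → G ∣ ℓ - 1 := by
    intro ℓ hℓp hℓN
    haveI : Fact ℓ.Prime := ⟨hℓp⟩
    have hℓ2 : 2 ≤ ℓ := hℓp.two_le
    have hℓ1 : ℓ - 1 ≠ 0 := by
      have : ℓ ≠ 2 := by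
        rintro rfl
        rcases hodd with ⟨k, hk⟩
        omega
      omega
    have hA : ∀ p : ℕ, p.Prime → p ∣ F →
        p ^ ((N - 1).factorization p) ∣ ℓ - 1 := by
      intro p hp hpF
      obtain ⟨a, ha1, ha2⟩ := hdiv p hp hpF
      have hpN1 : p ∣ N - 1 := hpF.trans hFdvd
      have hcast1 : ((a : ZMod ℓ)) ^ (N - 1) = 1 := by
        have h1 : ((a : ZMod N)) ^ (N - 1) = 1 := by
          have h1' : ((a ^ (N - 1) : ℤ) : ZMod N) = ((1 : ℤ) : ZMod N) :=
            (ZMod.intCast_eq_intCast_iff _ _ _).mpr ha1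
          push_cast at h1'
          exact h1'
        have h2 := congrArg (ZMod.castHom hℓN (ZMod ℓ)) h1
        rw [map_pow, map_one, map_intCast] at h2
        exact h2
      have hane : (a : ZMod ℓ) ≠ 0 := by
        intro h0
        rw [h0, zero_pow hN1] at hcast1
        exact zero_ne_one hcast1
      have hord1 : orderOf (a : ZMod ℓ) ∣ N - 1 := orderOf_dvd_of_pow_eq_one hcast1
      have hord2 : orderOf (a : ZMod ℓ) ∣ ℓ - 1 :=
        orderOf_dvd_of_pow_eq_one (ZMod.pow_card_sub_one_eq_one hane)
      have hord3 : ¬ orderOf (a : ZMod ℓ) ∣ (N - 1) / p := by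
        intro hdvd'
        have hpow : (a : ZMod ℓ) ^ ((N - 1) / p) = 1 :=
          orderOf_dvd_iff_pow_eq_one.mp hdvd'
        have hz : ((a ^ ((N - 1) / p) - 1 : ℤ) : ZMod ℓ) = 0 := by
          push_cast
          rw [hpow]
          ring
        have hdℓ : (ℓ : ℤ) ∣ a ^ ((N - 1) / p) - 1 :=
          (ZMod.intCast_zmod_eq_zero_iff_dvd _ _).mp hz
        have hdN : (ℓ : ℤ) ∣ (N : ℤ) := Int.natCast_dvd_natCast.mpr hℓN
        have : (ℓ : ℤ) ∣ (Int.gcd (a ^ ((N - 1) / p) - 1) (N : ℤ) : ℤ) :=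
          Int.dvd_coe_gcd hdℓ hdN
        rw [ha2] at this
        have : (ℓ : ℤ) ≤ 1 := Int.le_of_dvd one_pos this
        omega
      exact (aux_pow_factorization_dvd hN1 hp hpN1 hord1 hord3).trans hord2
    -- F ∣ ℓ - 1
    have hFl : F ∣ ℓ - 1 := by
      rw [← Nat.factorization_le_iff_dvd hF0 hℓ1]
      intro p
      rcases eq_or_ne (F.factorization p) 0 with h0 | h0
      · simp [h0]
      · have hps : p ∈ F.factorization.support := Finsupp.mem_support_iff.mpr h0
        have hpp : p.Prime := Nat.prime_of_mem_primeFactors hps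
        have hpF : p ∣ F := Nat.dvd_of_mem_primeFactors hps
        have h1 := hA p hpp hpF
        have h2 := (hpp.pow_dvd_iff_le_factorization hℓ1).mp h1
        have h3 := hFfact p
        omega
    have h2e : 2 ^ e ∣ ℓ - 1 := hA 2 Nat.prime_two h2F
    have hul : u ∣ ℓ - 1 := (Nat.ordCompl_dvd F 2).trans hFl
    rw [hG2]
    exact Nat.Coprime.mul_dvd_of_dvd_of_dvd hcop h2e hul
  -- Step C: every divisor of N is ≡ 1 mod G
  have hprod : ∀ B : ℕ, B ∣ N → (B : ZMod G) = 1 := by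
    intro B
    induction B using Nat.strong_induction_on with
    | _ B ih =>
      intro hB
      rcases eq_or_ne B 1 with rfl | hB1
      · exact Nat.cast_one
      have hB0 : B ≠ 0 := by
        rintro rfl
        have := Nat.eq_zero_of_zero_dvd hB
        omega
      obtain ⟨ℓ, hℓp, hℓB⟩ := Nat.exists_prime_and_dvd hB1
      obtain ⟨B', rfl⟩ := hℓB
      have hB'0 : B' ≠ 0 := by rintro rfl; simp at hB0
      have hB'N : B' ∣ N := (dvd_mul_left B' ℓ).trans hB
      have hB'lt : B' < ℓ * B' := by
        have h2 := hℓp.two_le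
        calc B' = 1 * B' := (one_mul B').symm
        _ < ℓ * B' := by
          exact Nat.mul_lt_mul_of_lt_of_le (by omega) le_rfl (by omega)
      have h1 := ih B' hB'lt hB'N
      have hℓ1 : (ℓ : ZMod G) = 1 := by
        obtain ⟨k, hk⟩ := hstep ℓ hℓp ((Dvd.intro B' rfl).trans hB)
        have hℓeq : ℓ = G * k + 1 := by have := hℓp.two_le; omega
        rw [hℓeq]
        push_cast
        simp [ZMod.natCast_self]
      push_cast
      rw [hℓ1, h1, one_mul]
  have hdvd1 : ∀ B : ℕ, B ∣ N → 1 ≤ B → G ∣ B - 1 := by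
    intro B hB hB1
    have h := hprod B hB
    have hz : ((B - 1 : ℕ) : ZMod G) = 0 := by
      rw [Nat.cast_sub hB1, h]
      simp
    exact (ZMod.natCast_eq_zero_iff _ _).mp hz
  -- decompose N
  obtain ⟨A, hAdvd, hA2, hAlt⟩ := Nat.exists_dvd_of_not_prime2 (by omega) hnp
  obtain ⟨B, hNAB⟩ := hAdvd
  have hB2 : 2 ≤ B := by
    rcases Nat.lt_or_ge B 2 with hb | hb
    · interval_cases B
      · omega
      · omega
    · exact hb
  have hGA := hdvd1 A ⟨B, hNAB⟩ (by omega)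
  have hGB := hdvd1 B ⟨A, by rw [hNAB]; ring⟩ (by omega)
  obtain ⟨m, hmA⟩ := hGA
  obtain ⟨m', hmB⟩ := hGB
  have hm1 : 1 ≤ m := by
    rcases Nat.eq_zero_or_pos m with rfl | h
    · simp at hmA; omega
    · exact h
  have hm'1 : 1 ≤ m' := by
    rcases Nat.eq_zero_or_pos m' with rfl | h
    · simp at hmB; omega
    · exact h
  have hA_eq : A = G * m + 1 := by omega
  have hB_eq : B = G * m' + 1 := by omega
  set S := G * m * m' + m + m' with hSdef
  have hN' : N = G * S + 1 := by
    rw [hNAB, hA_eq, hB_eq, hSdef]; ring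
  have hN1eq : N - 1 = G * S := by omega
  -- S is odd
  have hS_odd : ¬ 2 ∣ S := by
    rintro ⟨S', hS'⟩
    have h2e1 : ¬ 2 ^ (e + 1) ∣ N - 1 := by
      rw [he]
      exact Nat.pow_succ_factorization_not_dvd hN1 Nat.prime_two
    exact h2e1 ⟨u * S', by rw [hN1eq, hS', hG2]; ring⟩
  have hsum_odd : ¬ 2 ∣ m + m' := by
    have h1 : 2 ∣ G * m * m' := (h2G.mul_right m).mul_right m'
    rw [hSdef] at hS_odd
    omega
  have hmm'_even : 2 ∣ m * m' := by
    rcases Nat.even_or_odd m with hme | hmo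
    · exact Dvd.dvd.mul_right hme.two_dvd m'
    · have : 2 ∣ m' := by
        rcases hmo with ⟨k, hk⟩
        omega
      exact Dvd.dvd.mul_left this m
  obtain ⟨h, hh⟩ := hmm'_even
  have hhpos : 1 ≤ h := by
    have h1 : 1 ≤ m * m' := Nat.mul_pos hm1 hm'1
    rw [hh] at h1
    omega
  -- bound : m*m'*c^2 < 2*F
  have hNlt : N < 2 * F ^ 3 := by
    have h2 : (N : ℚ) < ((2 * F ^ 3 : ℕ) : ℚ) := by
      push_cast
      linarith
    exact_mod_cast h2
  have hNgt : m * m' * G ^ 2 < N := by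
    have h1 : m * m' * G ^ 2 ≤ G * S := by
      calc m * m' * G ^ 2 = G * (G * m * m') := by ring
      _ ≤ G * S := Nat.mul_le_mul_left G (by rw [hSdef]; omega)
    omega
  have hkey : m * m' * c ^ 2 < 2 * F := by
    have h1 : (m * m' * c ^ 2) * F ^ 2 < (2 * F) * F ^ 2 := by
      calc (m * m' * c ^ 2) * F ^ 2 = m * m' * G ^ 2 := by rw [hG]; ring
      _ < N := hNgt
      _ < 2 * F ^ 3 := hNlt
      _ = (2 * F) * F ^ 2 := by ring
    exact Nat.lt_of_mul_lt_mul_right h1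
  have hmm'2 : 2 ≤ m * m' := by omega
  have hsumle : m + m' ≤ m * m' + 1 := aux_add_le_mul hm1 hm'1
  -- bound on r0 = c*(m+m')
  have hr0lt : c * (m + m') < 2 * F := by
    rcases eq_or_lt_of_le hcpos with hc1 | hc2
    · -- c = 1
      have hmm'lt : m * m' < 2 * F := by
        have := hkey
        rw [← hc1] at this
        simpa using this
      have hne : m + m' ≠ 2 * F := by
        intro hcontr
        exact hsum_odd (hcontr ▸ ⟨F, rfl⟩)
      rw [← hc1, one_mul]
      omega
    · -- 2 ≤ c
      have h2c : 2 ≤ c := hc2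
      have h1 : 2 * (c * (m * m')) ≤ m * m' * c ^ 2 := by
        calc 2 * (c * (m * m')) ≤ c * (c * (m * m')) := Nat.mul_le_mul h2c le_rfl
        _ = m * m' * c ^ 2 := by ring
      have h2 : c * (m * m') < F := by omega
      have h3 : 2 * c ^ 2 ≤ m * m' * c ^ 2 := Nat.mul_le_mul hmm'2 le_rfl
      have h4 : c ^ 2 < F := by omega
      have h5 : c < F := lt_of_le_of_lt (Nat.le_self_pow two_ne_zero c) h4
      calc c * (m + m') ≤ c * (m * m' + 1) := Nat.mul_le_mul_left c hsumle
      _ = c * (m * m') + c := by ring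
      _ < F + F := by omega
      _ = 2 * F := by ring
  have hr0ge : 1 ≤ c * (m + m') := Nat.mul_pos hcpos (by omega)
  -- R = 2F*(h*c^2) + c*(m+m')
  have hNint : (F : ℤ) * R = (N : ℤ) - 1 := by
    have h0 : ((N - 1 : ℕ) : ℤ) = (N : ℤ) - 1 := by omega
    rw [← h0, hFR]
    push_cast
    ring
  have hNeq : (N : ℤ) = ((c : ℤ) * F * m + 1) * ((c : ℤ) * F * m' + 1) := by
    have hnat : N = (c * F * m + 1) * (c * F * m' + 1) := by
      rw [hNAB, hA_eq, hB_eq, hG]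
    exact_mod_cast hnat
  have h3 : (m : ℤ) * m' = 2 * h := by exact_mod_cast hh
  have hZ : (F : ℤ) * R = (F : ℤ) * (2 * F * (h * c ^ 2) + c * (m + m')) := by
    linear_combination hNint + hNeq + (c : ℤ) ^ 2 * (F : ℤ) ^ 2 * h3
  have hR : R = 2 * F * (h * c ^ 2) + c * (m + m') := by
    have hnat : F * R = F * (2 * F * (h * c ^ 2) + c * (m + m')) := by
      exact_mod_cast hZ
    exact Nat.eq_of_mul_eq_mul_left hFpos hnat
  -- uniqueness of division
  have h2Fpos : 0 < 2 * F := by omega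
  have e1 : 2 * F * q + r = 2 * F * (h * c ^ 2) + c * (m + m') := by
    rw [← hqr, hR]
  have d1 : (2 * F * q + r) / (2 * F) = q := by
    rw [Nat.mul_add_div h2Fpos, Nat.div_eq_of_lt hr2, add_zero]
  have d2 : (2 * F * (h * c ^ 2) + c * (m + m')) / (2 * F) = h * c ^ 2 := by
    rw [Nat.mul_add_div h2Fpos, Nat.div_eq_of_lt hr0lt, add_zero]
  have hq_eq : q = h * c ^ 2 := by rw [← d1, e1, d2]
  have hr_eq : r = c * (m + m') := by
    rw [hq_eq] at e1
    exact Nat.add_left_cancel e1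
  -- final contradiction
  rcases hsq with hq0 | hnosq
  · have : 1 ≤ h * c ^ 2 := Nat.mul_pos hhpos (pow_pos hcpos 2)
    omega
  · apply hnosq
    refine ⟨(c : ℤ) * ((m : ℤ) - (m' : ℤ)), ?_⟩
    have hr' : (r : ℤ) = (c : ℤ) * ((m : ℤ) + (m' : ℤ)) := by exact_mod_cast hr_eq
    have hq' : (q : ℤ) = (h : ℤ) * (c : ℤ) ^ 2 := by exact_mod_cast hq_eq
    rw [hr', hq']
    linear_combination (-4 : ℤ) * (c : ℤ) ^ 2 * h3
end

section
/- Let N > 1 be odd and F an even divisor of N − 1 such that for each prime p dividing F there is an integer a with a^(N−1) ≡ 1 (mod N) and gcd(a^((N−1)/p) − 1, N) = 1. Then every prime divisor q of N satisfies q ≡ 1 (mod F). -/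
theorem stmt_14 (N F : ℕ) (hN : 1 < N) (hodd : Odd N) (hFeven : Even F)
    (hF : F ∣ N - 1)
    (hdiv : ∀ p : ℕ, p.Prime → p ∣ F →
      ∃ a : ℤ, a ^ (N - 1) ≡ 1 [ZMOD (N : ℤ)] ∧
        Int.gcd (a ^ ((N - 1) / p) - 1) (N : ℤ) = 1) :
    ∀ q : ℕ, q.Prime → q ∣ N → q ≡ 1 [MOD F] := by
  intro q hq hqN
  haveI := Fact.mk hq
  set n := N - 1 with hn
  have hn0 : n ≠ 0 := by omega
  have hF0 : F ≠ 0 := by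
    rintro rfl
    exact hn0 (Nat.eq_zero_of_zero_dvd hF)
  have hq2 : 2 ≤ q := hq.two_le
  have hq10 : q - 1 ≠ 0 := by omega
  have hqZ : (q : ℤ) ∣ (N : ℤ) := Int.natCast_dvd_natCast.mpr hqN
  suffices h : F ∣ q - 1 by
    exact ((Nat.modEq_iff_dvd' (by omega)).mpr h).symm
  rw [← Nat.factorization_le_iff_dvd hF0 hq10, Finsupp.le_def]
  intro p
  by_cases hp : p.Prime
  · set k := F.factorization p with hk
    rcases Nat.eq_zero_or_pos k with hk0 | hk1
    · simp [← hk, hk0]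
    have hpF : p ∣ F := by
      by_contra hcon
      rw [hk, Nat.factorization_eq_zero_of_not_dvd hcon] at hk1
      omega
    obtain ⟨a, ha1, ha2⟩ := hdiv p hp hpF
    set b : ZMod q := (a : ZMod q) with hb
    have hb1 : b ^ n = 1 := by
      have := (ZMod.intCast_eq_intCast_iff _ _ _).mpr (ha1.of_dvd hqZ)
      push_cast at this
      exact this
    have hpn : p ∣ n := hpF.trans hF
    have hnp0 : n / p ≠ 0 :=
      (Nat.div_pos (Nat.le_of_dvd (Nat.pos_of_ne_zero hn0) hpn) hp.pos).ne'
    have hb2 : b ^ (n / p) ≠ 1 := by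
      intro h
      have hdvd : (q : ℤ) ∣ a ^ (n / p) - 1 := by
        rw [← ZMod.intCast_zmod_eq_zero_iff_dvd]
        push_cast
        rw [← hb, h]
        ring
      have : (q : ℤ) ∣ (Int.gcd (a ^ (n / p) - 1) (N : ℤ) : ℤ) :=
        Int.dvd_coe_gcd hdvd hqZ
      rw [ha2] at this
      have := Int.le_of_dvd one_pos this
      omega
    have hbne : b ≠ 0 := by
      intro h
      rw [h, zero_pow hn0] at hb1
      exact one_ne_zero hb1.symm
    set d := orderOf b with hd
    have hd1 : d ∣ n := orderOf_dvd_of_pow_eq_one hb1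
    have hd0 : d ≠ 0 := fun h => hn0 (Nat.eq_zero_of_zero_dvd (h ▸ hd1))
    have hd2 : ¬ d ∣ n / p := fun h => hb2 (orderOf_dvd_iff_pow_eq_one.mp h)
    have hd3 : d ∣ q - 1 :=
      orderOf_dvd_of_pow_eq_one (ZMod.pow_card_sub_one_eq_one hbne)
    have hval : n.factorization p ≤ d.factorization p := by
      by_contra hlt
      push_neg at hlt
      apply hd2
      rw [← Nat.factorization_le_iff_dvd hd0 hnp0, Finsupp.le_def]
      intro r
      rw [Nat.factorization_div hpn, hp.factorization]
      have hdn : d.factorization r ≤ n.factorization r :=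
        (Nat.factorization_le_iff_dvd hd0 hn0).mpr hd1 r
      by_cases hr : r = p
      · subst hr
        simp only [Finsupp.coe_tsub, Pi.sub_apply, Finsupp.single_eq_same]
        omega
      · simp only [Finsupp.coe_tsub, Pi.sub_apply,
          Finsupp.single_eq_of_ne' (Ne.symm hr), Nat.sub_zero]
        exact hdn
    have h1 : k ≤ n.factorization p := (Nat.factorization_le_iff_dvd hF0 hn0).mpr hF p
    have h2 : d.factorization p ≤ (q - 1).factorization p :=
      (Nat.factorization_le_iff_dvd hd0 hq10).mpr hd3 p
    exact le_trans h1 (le_trans hval h2)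
  · rw [Nat.factorization_eq_zero_of_not_prime _ hp]
    exact Nat.zero_le _
end

section
/- If k and n are positive integers with 43 ≤ n, 43 does not divide k, and x = k·(n#/43) where n# denotes the product of all primes ≤ n, then for every prime p ≤ n with p ≠ 43, f(g(x)) is not divisible by p, where f(x) = x² + x + 41 and g(x) = 40x³ + 41x² + 42x + 1. -/
theorem stmt_19 (k n : ℕ) (hk : 0 < k) (hn : 43 ≤ n) (h43 : ¬ 43 ∣ k)
    (x : ℤ) (hx : x = (k : ℤ) * ((primorial n : ℤ) / 43)) :
    ∀ p : ℕ, p.Prime → p ≤ n → p ≠ 43 →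
      ¬ (p : ℤ) ∣ ((40 * x ^ 3 + 41 * x ^ 2 + 42 * x + 1) ^ 2 +
          (40 * x ^ 3 + 41 * x ^ 2 + 42 * x + 1) + 41) := by
  intro p hp hpn hp43 hdvd
  -- 43 divides primorial n
  have h43prime : Nat.Prime 43 := by norm_num
  have h43d : (43 : ℕ) ∣ primorial n := by
    apply Finset.dvd_prod_of_mem
    simp only [Finset.mem_filter, Finset.mem_range]
    exact ⟨by omega, h43prime⟩
  have hpd : p ∣ primorial n := by
    apply Finset.dvd_prod_of_mem
    simp only [Finset.mem_filter, Finset.mem_range]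
    exact ⟨by omega, hp⟩
  -- p divides primorial n / 43
  have hcop : Nat.Coprime p 43 :=
    (Nat.coprime_primes hp h43prime).mpr hp43
  have hpdiv : p ∣ primorial n / 43 := by
    have hmul : primorial n / 43 * 43 = primorial n := Nat.div_mul_cancel h43d
    exact hcop.dvd_of_dvd_mul_right (by rw [hmul]; exact hpd)
  -- hence p divides x
  have hpx : (p : ℤ) ∣ x := by
    rw [hx]
    have : ((primorial n : ℤ) / 43) = ((primorial n / 43 : ℕ) : ℤ) := by
      rw [Int.natCast_ediv]; norm_num
    rw [this]
    exact Dvd.dvd.mul_left (Int.natCast_dvd_natCast.mpr hpdiv) _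
  -- expression minus 43 is divisible by x
  have hfact : ((40 * x ^ 3 + 41 * x ^ 2 + 42 * x + 1) ^ 2 +
      (40 * x ^ 3 + 41 * x ^ 2 + 42 * x + 1) + 41) - 43 =
      x * ((40 * x ^ 2 + 41 * x + 42) * (40 * x ^ 3 + 41 * x ^ 2 + 42 * x + 3)) := by
    ring
  have h43dvd : (p : ℤ) ∣ 43 := by
    have h1 : (p : ℤ) ∣ ((40 * x ^ 3 + 41 * x ^ 2 + 42 * x + 1) ^ 2 +
        (40 * x ^ 3 + 41 * x ^ 2 + 42 * x + 1) + 41) - 43 := by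
      rw [hfact]; exact hpx.mul_right _
    have := dvd_sub hdvd h1
    simpa using this
  have : p ∣ 43 := by exact_mod_cast h43dvd
  exact hp43 ((Nat.prime_dvd_prime_iff_eq hp h43prime).mp this)
end
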